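/- arXiv:0801.0480 — 6 statements merged into one kernel-verified Lean document; each statement's English description precedes it below -/
import Mathlib

section
/- Let q be a real number with 0 < q < 1, let h ≥ 1 be an integer and let x ≥ 0 be a real number. Then for every real t, the series Σ_{m=0}^∞ (−1)^m q^{hm} exp([m+x]_q · t) converges absolutely, and for every n ≥ 0 the power series Σ_{n=0}^∞ E_n(x, h | q) t^n / n! converges to the same value; i.e. Σ_{n=0}^∞ E_n(x, h | q) t^n / n! = [2]_q Σ_{m=0}^∞ (−1)^m q^{hm} exp([m+x]_q · t). -/
open Finset

/-- The q-analogue `[x]_q = (1 - q^x)/(1 - q)` for real `x` (using the real power `q ^ x`). -/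
noncomputable def qNum (q x : ℝ) : ℝ := (1 - q ^ x) / (1 - q)

/-- The q-Euler polynomial
`E_n(x, h | q) = [2]_q (1-q)^{-n} Σ_{l=0}^{n} C(n,l) (-1)^l q^{lx} / (1 + q^{l+h})`. -/
noncomputable def qEuler (q : ℝ) (n h : ℕ) (x : ℝ) : ℝ :=
  (1 + q) * ((1 - q) ^ n)⁻¹ *
    ∑ l ∈ range (n + 1), (n.choose l : ℝ) * (-1) ^ l * q ^ ((l : ℝ) * x) / (1 + q ^ (l + h))

lemma real_hasSum_exp (y : ℝ) :
    HasSum (fun n : ℕ => y ^ n / (n.factorial : ℝ)) (Real.exp y) := by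
  have := NormedSpace.exp_series_hasSum_exp' (𝕂 := ℝ) y
  rw [Real.exp_eq_exp_ℝ]
  simpa [smul_eq_mul, div_eq_inv_mul] using this

/-- the generating function identity
`Σ_n E_n(x,h|q) tⁿ/n! = [2]_q Σ_m (-1)^m q^{hm} exp([m+x]_q t)`,
with the right-hand series converging absolutely. -/
theorem qEuler_generating_function (q : ℝ) (hq0 : 0 < q) (hq1 : q < 1)
    (h : ℕ) (hh : 1 ≤ h) (x : ℝ) (hx : 0 ≤ x) (t : ℝ) :
    Summable (fun m : ℕ => |(-1 : ℝ) ^ m * q ^ (h * m) * Real.exp (qNum q ((m : ℝ) + x) * t)|) ∧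
    HasSum (fun n : ℕ => qEuler q n h x * t ^ n / (n.factorial : ℝ))
      ((1 + q) * ∑' m : ℕ, (-1 : ℝ) ^ m * q ^ (h * m) * Real.exp (qNum q ((m : ℝ) + x) * t)) := by
  have h1q : (0:ℝ) < 1 - q := by linarith
  -- basic bounds for qNum
  have hqNum_nonneg : ∀ m : ℕ, 0 ≤ qNum q ((m : ℝ) + x) := by
    intro m
    have h1 : q ^ ((m : ℝ) + x) ≤ 1 :=
      Real.rpow_le_one hq0.le hq1.le (by positivity)
    unfold qNum
    apply div_nonneg (by linarith) h1q.le
  have hqNum_le : ∀ m : ℕ, qNum q ((m : ℝ) + x) ≤ (1 - q)⁻¹ := by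
    intro m
    have h2 : 0 < q ^ ((m : ℝ) + x) := Real.rpow_pos_of_pos hq0 _
    unfold qNum
    rw [div_le_iff₀ h1q]
    rw [inv_mul_cancel₀ h1q.ne']
    linarith
  set u : ℕ → ℝ := fun m => qNum q ((m : ℝ) + x) * t with hu
  set F : ℕ × ℕ → ℝ :=
    fun p => (-1 : ℝ) ^ p.1 * q ^ (h * p.1) * (u p.1) ^ p.2 / (p.2.factorial : ℝ) with hF
  -- summability of F
  have habsF : ∀ p : ℕ × ℕ,
      |F p| ≤ (q ^ h) ^ p.1 * (((1 - q)⁻¹ * |t|) ^ p.2 / (p.2.factorial : ℝ)) := by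
    intro ⟨m, n⟩
    have hum : |u m| ≤ (1 - q)⁻¹ * |t| := by
      rw [hu, abs_mul, abs_of_nonneg (hqNum_nonneg m)]
      exact mul_le_mul_of_nonneg_right (hqNum_le m) (abs_nonneg t)
    have : |F (m, n)| = q ^ (h * m) * (|u m| ^ n / (n.factorial : ℝ)) := by
      simp [hF, abs_mul, abs_div, abs_pow, abs_of_nonneg hq0.le,
        abs_of_nonneg (Nat.cast_nonneg (α := ℝ) n.factorial), mul_div_assoc]
    rw [this, pow_mul]
    refine mul_le_mul_of_nonneg_left ?_ (by positivity)
    refine div_le_div_of_nonneg_right ?_ (by positivity)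
    exact pow_le_pow_left₀ (abs_nonneg _) hum n
  have hGsum : Summable (fun p : ℕ × ℕ =>
      (q ^ h) ^ p.1 * (((1 - q)⁻¹ * |t|) ^ p.2 / (p.2.factorial : ℝ))) := by
    have hg1 : Summable (fun m : ℕ => (q ^ h) ^ m) :=
      summable_geometric_of_lt_one (by positivity) (pow_lt_one₀ hq0.le hq1 (by omega))
    have hg2 : Summable (fun n : ℕ => ((1 - q)⁻¹ * |t|) ^ n / (n.factorial : ℝ)) :=
      Real.summable_pow_div_factorial _
    exact hg1.mul_of_nonneg hg2 (fun m => by positivity) (fun n => by positivity)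
  have hFabs : Summable fun p : ℕ × ℕ => |F p| :=
    Summable.of_nonneg_of_le (fun p => abs_nonneg _) habsF hGsum
  have hFsum : Summable F := summable_abs_iff.mp hFabs
  set S : ℝ := ∑' p : ℕ × ℕ, F p with hS
  -- fibers over m : exponential series
  have hfib_m : ∀ m : ℕ, HasSum (fun n => F (m, n))
      ((-1 : ℝ) ^ m * q ^ (h * m) * Real.exp (u m)) := by
    intro m
    have := (real_hasSum_exp (u m)).mul_left ((-1 : ℝ) ^ m * q ^ (h * m))
    simpa [hF, mul_div_assoc] using this
  have hR : HasSum (fun m : ℕ => (-1 : ℝ) ^ m * q ^ (h * m) * Real.exp (u m)) S :=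
    hFsum.hasSum.prod_fiberwise hfib_m
  constructor
  · exact summable_abs_iff.mpr hR.summable
  -- fibers over n : geometric series
  have hswap : HasSum (fun p : ℕ × ℕ => F (p.2, p.1)) S := by
    have := (Equiv.hasSum_iff (Equiv.prodComm ℕ ℕ) (f := F)).mpr hFsum.hasSum
    exact this
  have hfib_n : ∀ n : ℕ, HasSum (fun m => F (m, n))
      ((∑ l ∈ range (n + 1),
          (n.choose l : ℝ) * (-1) ^ l * q ^ ((l : ℝ) * x) / (1 + q ^ (l + h))) *
        (((1 - q) ^ n)⁻¹ * t ^ n / (n.factorial : ℝ))) := by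
    intro n
    set coeff : ℕ → ℝ := fun l =>
      (n.choose l : ℝ) * (-1) ^ l * q ^ ((l : ℝ) * x) * ((1 - q) ^ n)⁻¹ * t ^ n
        / (n.factorial : ℝ) with hcoeff
    have hterm : ∀ l ∈ range (n + 1), HasSum (fun m : ℕ => coeff l * (-(q ^ (l + h))) ^ m)
        (coeff l * (1 + q ^ (l + h))⁻¹) := by
      intro l _
      have hlt : |(-(q ^ (l + h)) : ℝ)| < 1 := by
        rw [abs_neg, abs_of_nonneg (by positivity)]
        exact pow_lt_one₀ hq0.le hq1 (by omega)
      have := (hasSum_geometric_of_abs_lt_one hlt).mul_left (coeff l)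
      simpa [sub_neg_eq_add] using this
    have hsum := hasSum_sum hterm
    have hpt : ∀ m : ℕ, F (m, n) =
        ∑ l ∈ range (n + 1), coeff l * (-(q ^ (l + h))) ^ m := by
      intro m
      have ha : ∀ l : ℕ, (q ^ ((m : ℝ) + x)) ^ l = q ^ ((l : ℝ) * x) * (q ^ l) ^ m := by
        intro l
        rw [← pow_mul, ← Real.rpow_natCast (q ^ ((m : ℝ) + x)) l, ← Real.rpow_mul hq0.le,
          ← Real.rpow_natCast q (l * m), ← Real.rpow_add hq0]
        congr 1
        push_cast
        ring
      have hbin : (1 - q ^ ((m : ℝ) + x)) ^ n =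
          ∑ l ∈ range (n + 1),
            (-(q ^ ((m : ℝ) + x))) ^ l * 1 ^ (n - l) * (n.choose l : ℝ) := by
        rw [show (1 - q ^ ((m : ℝ) + x)) = -(q ^ ((m : ℝ) + x)) + 1 by ring, add_pow]
      have : F (m, n) = (-1 : ℝ) ^ m * q ^ (h * m) *
          ((1 - q ^ ((m : ℝ) + x)) ^ n * t ^ n * ((1 - q) ^ n)⁻¹) / (n.factorial : ℝ) := by
        simp only [hF, hu]
        unfold qNum
        rw [div_mul_eq_mul_div, div_pow, div_eq_mul_inv _ ((1 - q) ^ n), mul_pow]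
      rw [this, hbin, Finset.sum_mul, Finset.sum_mul, Finset.mul_sum, Finset.sum_div]
      refine Finset.sum_congr rfl fun l _ => ?_
      rw [hcoeff]
      have h1 : (-(q ^ ((m : ℝ) + x))) ^ l = (-1 : ℝ) ^ l * (q ^ ((m : ℝ) + x)) ^ l := by
        ring
      have h2 : (-(q ^ (l + h) : ℝ)) ^ m = (-1 : ℝ) ^ m * (q ^ l) ^ m * (q ^ h) ^ m := by
        rw [pow_add]; ring
      rw [h1, ha l, h2, pow_mul]
      ring
    have hval : ∑ l ∈ range (n + 1), coeff l * (1 + q ^ (l + h))⁻¹ =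
        (∑ l ∈ range (n + 1),
            (n.choose l : ℝ) * (-1) ^ l * q ^ ((l : ℝ) * x) / (1 + q ^ (l + h))) *
          (((1 - q) ^ n)⁻¹ * t ^ n / (n.factorial : ℝ)) := by
      rw [Finset.sum_mul]
      refine Finset.sum_congr rfl fun l _ => ?_
      rw [hcoeff]
      ring
    rw [← hval]
    simpa only [← hpt] using hsum
  have hC := hswap.prod_fiberwise hfib_n
  have := hC.mul_left (1 + q)
  rw [hR.tsum_eq]
  refine this.congr_fun fun n => ?_
  unfold qEuler
  ring
end

section
/- Let q be a real number with 0 < q < 1, let h ≥ 1 be an integer, let n ≥ 0 be an integer and let x ≥ 0 be a real number. Then the series Σ_{m=0}^∞ (−1)^m q^{hm} [m+x]_q^n converges absolutely and [2]_q Σ_{m=0}^∞ (−1)^m q^{hm} [m+x]_q^n = E_n(x, h | q), i.e. it equals [2]_q (1 − q)^{−n} Σ_{l=0}^{n} C(n,l) (−1)^l q^{lx} / (1 + q^{l+h}). -/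
open Finset

/-- `[2]_q Σ_{m=0}^∞ (-1)^m q^{hm} [m+x]_qⁿ = E_n(x, h | q)`,
with the series converging absolutely. -/
theorem qEuler_eq_series (q : ℝ) (hq0 : 0 < q) (hq1 : q < 1)
    (h : ℕ) (hh : 1 ≤ h) (n : ℕ) (x : ℝ) (hx : 0 ≤ x) :
    Summable (fun m : ℕ => |(-1 : ℝ) ^ m * q ^ (h * m) * (qNum q ((m : ℝ) + x)) ^ n|) ∧
    (1 + q) * ∑' m : ℕ, (-1 : ℝ) ^ m * q ^ (h * m) * (qNum q ((m : ℝ) + x)) ^ n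
      = qEuler q n h x := by
  have h1q : (0:ℝ) < 1 - q := by linarith
  -- pointwise expansion of the term as a finite sum of geometric terms
  have key : ∀ m : ℕ, (-1 : ℝ) ^ m * q ^ (h * m) * (qNum q ((m : ℝ) + x)) ^ n
      = ∑ l ∈ range (n + 1),
        ((n.choose l : ℝ) * (-1) ^ l * q ^ ((l : ℝ) * x) / (1 - q) ^ n) * (-(q ^ (h + l))) ^ m := by
    intro m
    have hnum : (1 - q ^ ((m : ℝ) + x)) ^ n
        = ∑ l ∈ range (n + 1), (-(q ^ ((m : ℝ) + x))) ^ l * 1 ^ (n - l) * (n.choose l : ℝ) := by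
      rw [← add_pow]; ring_nf
    rw [qNum, div_pow, hnum, Finset.sum_div, Finset.mul_sum]
    refine Finset.sum_congr rfl fun l hl => ?_
    have e1 : (-(q ^ ((m : ℝ) + x))) ^ l = (-1) ^ l * q ^ (((m : ℝ) + x) * l) := by
      rw [neg_pow, ← Real.rpow_natCast (q ^ ((m:ℝ)+x)) l, ← Real.rpow_mul hq0.le]
    have e2 : q ^ (((m : ℝ) + x) * l) = (q ^ l) ^ m * q ^ ((l : ℝ) * x) := by
      rw [add_mul, Real.rpow_add hq0, mul_comm (x : ℝ) (l : ℝ)]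
      congr 1
      rw [← Nat.cast_mul, Real.rpow_natCast, pow_mul']
    have e3 : (-(q ^ (h + l))) ^ m = (-1) ^ m * q ^ (h * m) * (q ^ l) ^ m := by
      rw [neg_pow, pow_add, mul_pow, pow_mul]
      ring
    rw [e1, e2, e3]
    ring
  -- each geometric ratio has absolute value < 1
  have hr : ∀ l : ℕ, |(-(q ^ (h + l)))| < 1 := by
    intro l
    rw [abs_neg, abs_of_pos (pow_pos hq0 _)]
    exact pow_lt_one₀ hq0.le hq1 (by omega)
  have hsuml : ∀ l : ℕ, ∀ c : ℝ, Summable (fun m : ℕ => c * (-(q ^ (h + l))) ^ m) :=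
    fun l c => (summable_geometric_of_abs_lt_one (hr l)).mul_left c
  constructor
  · -- summability via comparison with the geometric series
    refine Summable.of_nonneg_of_le (fun m => abs_nonneg _) ?_
      (((summable_geometric_of_lt_one hq0.le hq1)).mul_left (((1 - q)⁻¹) ^ n))
    · intro m
      have hle1 : q ^ ((m : ℝ) + x) ≤ 1 :=
        Real.rpow_le_one hq0.le hq1.le (by positivity)
      have h0 : (0:ℝ) ≤ q ^ ((m : ℝ) + x) := (Real.rpow_pos_of_pos hq0 _).le
      have hqn : 0 ≤ qNum q ((m : ℝ) + x) := by
        apply div_nonneg (by linarith) h1q.le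
      have hqn1 : qNum q ((m : ℝ) + x) ≤ (1 - q)⁻¹ := by
        rw [qNum, div_le_iff₀ h1q, inv_mul_cancel₀ h1q.ne']
        linarith
      simp only [abs_mul, abs_pow, abs_neg, abs_one, one_pow, one_mul,
        abs_of_pos hq0, abs_of_nonneg hqn]
      calc q ^ (h * m) * qNum q ((m:ℝ) + x) ^ n
          ≤ q ^ m * (1 - q)⁻¹ ^ n :=
            mul_le_mul (pow_le_pow_of_le_one hq0.le hq1.le (Nat.le_mul_of_pos_left m hh))
              (pow_le_pow_left₀ hqn hqn1 n) (by positivity) (by positivity)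
        _ = (1 - q)⁻¹ ^ n * q ^ m := mul_comm _ _
  · -- compute the tsum
    have := tsum_congr (L := SummationFilter.unconditional ℕ) key
    rw [this, Summable.tsum_finsetSum (fun l _ => hsuml l _)]
    have : ∀ l ∈ range (n + 1),
        ∑' m : ℕ, ((n.choose l : ℝ) * (-1) ^ l * q ^ ((l : ℝ) * x) / (1 - q) ^ n) * (-(q ^ (h + l))) ^ m
        = ((1 - q) ^ n)⁻¹ * ((n.choose l : ℝ) * (-1) ^ l * q ^ ((l : ℝ) * x) / (1 + q ^ (l + h))) := by
      intro l _
      rw [tsum_mul_left, tsum_geometric_of_abs_lt_one (hr l), sub_neg_eq_add, add_comm h l]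
      field_simp
    rw [Finset.sum_congr rfl this, ← Finset.mul_sum, qEuler]
    ring
end

section
/- Let q be a real number with 0 < q < 1, let n ≥ 0 be an integer and let k ≥ 1 be an odd positive integer. Then E_{n,q}(k) + E_{n,q} = [2]_q Σ_{l=0}^{k−1} (−1)^l [l]_q^n. -/
open Finset

/-- Alternating geometric sum for odd `k`. -/
lemma alt_geom (x : ℝ) (hx : 0 < x) (k : ℕ) (hko : Odd k) :
    ∑ l ∈ range k, (-1:ℝ)^l * x ^ l = (1 + x ^ k) / (1 + x) := by
  have h : ∀ l, (-1:ℝ)^l * x^l = (-x)^l := fun l => (neg_pow x l).symm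
  simp_rw [h]
  rw [geom_sum_eq (by nlinarith : (-x : ℝ) ≠ 1), hko.neg_pow]
  rw [div_eq_div_iff (by nlinarith : (-x : ℝ) - 1 ≠ 0) (by nlinarith : (1:ℝ) + x ≠ 0)]
  ring

/-- for odd `k ≥ 1`,
`E_{n,q}(k) + E_{n,q} = [2]_q Σ_{l=0}^{k-1} (-1)^l [l]_qⁿ`. -/
theorem qEuler_odd_sum (q : ℝ) (hq0 : 0 < q) (hq1 : q < 1)
    (n k : ℕ) (hk : 1 ≤ k) (hko : Odd k) :
    qEuler q n 0 (k : ℝ) + qEuler q n 0 0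
      = (1 + q) * ∑ l ∈ range k, (-1 : ℝ) ^ l * (qNum q (l : ℝ)) ^ n := by
  have hq2 : (1:ℝ) - q ≠ 0 := by linarith
  have hden : ∀ j : ℕ, (1:ℝ) + q ^ j ≠ 0 := fun j => by positivity
  unfold qEuler qNum
  have rp : ∀ l : ℕ, q ^ ((l:ℝ) * (k:ℝ)) = (q ^ l) ^ k := by
    intro l
    rw [show (l:ℝ)*(k:ℝ) = ((l*k : ℕ):ℝ) by push_cast; ring, Real.rpow_natCast, pow_mul]
  have rp0 : ∀ l : ℕ, q ^ ((l:ℝ) * (0:ℝ)) = 1 := fun l => by rw [mul_zero, Real.rpow_zero]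
  have rpl : ∀ l : ℕ, q ^ (l : ℝ) = q ^ l := fun l => Real.rpow_natCast q l
  simp only [rp, rp0, rpl, add_zero]
  have expand : ∀ l : ℕ, (1 - q^l : ℝ)^n
      = ∑ j ∈ range (n+1), (n.choose j : ℝ) * (-1)^j * ((q^j)^l) := by
    intro l
    rw [sub_eq_add_neg, add_comm, add_pow]
    refine Finset.sum_congr rfl fun j _ => ?_
    rw [neg_pow, one_pow, ← pow_mul, ← pow_mul, mul_comm l j]
    ring
  have key : ∑ l ∈ range k, (-1:ℝ)^l * (1 - q^l)^n
      = ∑ j ∈ range (n+1), (n.choose j : ℝ) * (-1)^j * ((1 + (q^j)^k)/(1+q^j)) := by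
    simp_rw [expand, Finset.mul_sum]
    rw [Finset.sum_comm]
    refine Finset.sum_congr rfl fun j _ => ?_
    rw [← alt_geom (q^j) (by positivity) k hko, Finset.mul_sum]
    refine Finset.sum_congr rfl fun l _ => ?_
    ring
  have rhs : ∀ l : ℕ, (-1:ℝ)^l * ((1 - q^l)/(1-q))^n
      = ((1-q)^n)⁻¹ * ((-1:ℝ)^l * (1 - q^l)^n) := fun l => by
    rw [div_pow]; field_simp
  simp_rw [rhs, ← Finset.mul_sum, key]
  have hpn : ((1:ℝ)-q)^n ≠ 0 := pow_ne_zero _ hq2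
  rw [Finset.mul_sum, Finset.mul_sum, ← mul_assoc, Finset.mul_sum, ← Finset.sum_add_distrib]
  refine Finset.sum_congr rfl fun j _ => ?_
  have := hden j
  field_simp
  ring
end

section
/- Let q be a real number with 0 < q < 1, let n ≥ 0 and h ≥ 0 be integers, and let x be a real number. Then E_n(x, h | q) = Σ_{l=0}^{n} C(n,l) q^{xl} E_l(h | q) [x]_q^{n−l}, where E_l(h | q) = E_l(0, h | q). -/
open Finset

private lemma qe_inner_sum (n j : ℕ) (hj : j ≤ n) (t : ℝ) :
    ∑ l ∈ Ico j (n + 1), (n.choose l : ℝ) * (l.choose j) * t ^ l * (1 - t) ^ (n - l)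
      = (n.choose j : ℝ) * t ^ j := by
  rw [Finset.sum_Ico_eq_sum_range]
  have h2 : ∀ m ∈ range (n + 1 - j),
      (n.choose (j + m) : ℝ) * ((j + m).choose j) * t ^ (j + m) * (1 - t) ^ (n - (j + m))
        = (n.choose j : ℝ) * t ^ j * ((((n - j).choose m : ℝ)) * t ^ m * (1 - t) ^ ((n - j) - m)) := by
    intro m hm
    rw [mem_range] at hm
    have hmn : j + m ≤ n := by omega
    have hc : (n.choose (j + m) : ℝ) * ((j + m).choose j) = (n.choose j : ℝ) * ((n - j).choose m) := by
      rw [← Nat.cast_mul, ← Nat.cast_mul, Nat.choose_mul (n := n) (Nat.le_add_right j m),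
        Nat.add_sub_cancel_left]
    have he : n - (j + m) = (n - j) - m := by omega
    rw [he, pow_add, hc]
    ring
  rw [Finset.sum_congr rfl h2, ← Finset.mul_sum]
  have hb : ∑ m ∈ range (n + 1 - j), ((n - j).choose m : ℝ) * t ^ m * (1 - t) ^ ((n - j) - m) = 1 := by
    have hr : n + 1 - j = (n - j) + 1 := by omega
    rw [hr]
    conv_rhs => rw [show (1 : ℝ) = (t + (1 - t)) ^ (n - j) by norm_num]
    rw [add_pow]
    exact Finset.sum_congr rfl fun k _ => by ring
  rw [hb, mul_one]

private lemma key_sum (A : ℕ → ℝ) (n : ℕ) (t : ℝ) :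
    ∑ l ∈ range (n + 1), (n.choose l : ℝ) * t ^ l *
        (∑ j ∈ range (l + 1), (l.choose j : ℝ) * (-1) ^ j * A j) * (1 - t) ^ (n - l)
      = ∑ j ∈ range (n + 1), (n.choose j : ℝ) * (-1) ^ j * t ^ j * A j := by
  have h1 : ∀ l ∈ range (n + 1),
      (n.choose l : ℝ) * t ^ l *
        (∑ j ∈ range (l + 1), (l.choose j : ℝ) * (-1) ^ j * A j) * (1 - t) ^ (n - l)
      = ∑ j ∈ range (l + 1),
          ((n.choose l : ℝ) * (l.choose j) * t ^ l * (1 - t) ^ (n - l)) * ((-1) ^ j * A j) := by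
    intro l _
    rw [Finset.mul_sum, Finset.sum_mul]
    apply Finset.sum_congr rfl
    intro j _
    ring
  rw [Finset.sum_congr rfl h1]
  rw [Finset.sum_comm' (t' := range (n + 1)) (s' := fun j => Ico j (n + 1))
    (by intro l j; simp [Nat.lt_succ_iff, mem_Ico]; omega)]
  apply Finset.sum_congr rfl
  intro j hj
  rw [mem_range, Nat.lt_succ_iff] at hj
  rw [← Finset.sum_mul, qe_inner_sum n j hj t]
  ring

/-- `E_n(x, h|q) = Σ_{l=0}^{n} C(n,l) q^{xl} E_l(h|q) [x]_q^{n-l}`. -/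
theorem qEuler_poly_expansion_h (q : ℝ) (hq0 : 0 < q) (hq1 : q < 1)
    (n h : ℕ) (x : ℝ) :
    qEuler q n h x
      = ∑ l ∈ range (n + 1),
          (n.choose l : ℝ) * q ^ (x * (l : ℝ)) * qEuler q l h 0 * (qNum q x) ^ (n - l) := by
  have h1q : (1 : ℝ) - q ≠ 0 := by linarith
  set t := q ^ x with ht
  have hql : ∀ l : ℕ, q ^ ((l : ℝ) * x) = t ^ l := by
    intro l
    rw [mul_comm, Real.rpow_mul hq0.le, Real.rpow_natCast]
  have hqx : ∀ l : ℕ, q ^ (x * (l : ℝ)) = t ^ l := by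
    intro l
    rw [mul_comm]; exact hql l
  have hA : ∀ (m : ℕ),
      qEuler q m h 0 = (1 + q) * ((1 - q) ^ m)⁻¹ *
        ∑ j ∈ range (m + 1), (m.choose j : ℝ) * (-1) ^ j * ((1 + q ^ (j + h))⁻¹) := by
    intro m
    unfold qEuler
    congr 1
    apply Finset.sum_congr rfl
    intro j _
    rw [mul_zero, Real.rpow_zero]
    ring
  have hrhs : ∀ l ∈ range (n + 1),
      (n.choose l : ℝ) * q ^ (x * (l : ℝ)) * qEuler q l h 0 * (qNum q x) ^ (n - l)
      = (1 + q) * ((1 - q) ^ n)⁻¹ *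
          ((n.choose l : ℝ) * t ^ l *
            (∑ j ∈ range (l + 1), (l.choose j : ℝ) * (-1) ^ j * ((1 + q ^ (j + h))⁻¹)) *
            (1 - t) ^ (n - l)) := by
    intro l hl
    rw [mem_range, Nat.lt_succ_iff] at hl
    rw [hqx l, hA l]
    unfold qNum
    rw [div_pow]
    field_simp
    rw [← ht, show (1 - q) ^ n = (1 - q) ^ l * (1 - q) ^ (n - l) by
      rw [← pow_add]; congr 1; omega]
    ring
  rw [Finset.sum_congr rfl hrhs, ← Finset.mul_sum,
    key_sum (fun j => (1 + q ^ (j + h))⁻¹) n t]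
  unfold qEuler
  congr 1
  apply Finset.sum_congr rfl
  intro l _
  rw [hql l]
  ring
end

section
/- Let q be a real number with 0 < q < 1, let n ≥ 0 be an integer and let k ≥ 1 be an odd positive integer. Then [2]_q Σ_{l=0}^{k−1} (−1)^l [l]_q^n = (q^{kn} + 1) E_{n,q} + Σ_{l=0}^{n−1} C(n,l) q^{kl} E_{l,q} [k]_q^{n−l}. -/
open Finset

/-- trinomial revision sum -/
lemma sum_choose_mul (n j : ℕ) (hj : j ≤ n) (a b : ℝ) :
    ∑ l ∈ range (n + 1), (n.choose l : ℝ) * (l.choose j : ℝ) * a ^ l * b ^ (n - l)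
      = (n.choose j : ℝ) * a ^ j * (a + b) ^ (n - j) := by
  rw [range_eq_Ico, ← Finset.sum_Ico_consecutive _ (Nat.zero_le j) (by omega : j ≤ n + 1)]
  have h1 : ∑ l ∈ Finset.Ico 0 j, (n.choose l : ℝ) * (l.choose j : ℝ) * a ^ l * b ^ (n - l) = 0 := by
    apply Finset.sum_eq_zero
    intro l hl
    simp only [Finset.mem_Ico] at hl
    rw [Nat.choose_eq_zero_of_lt hl.2]
    simp
  rw [h1, zero_add, Finset.sum_Ico_eq_sum_range]
  have h2 : n + 1 - j = n - j + 1 := by omega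
  rw [h2]
  have h3 : ∀ m ∈ range (n - j + 1),
      (n.choose (j + m) : ℝ) * ((j + m).choose j : ℝ) * a ^ (j + m) * b ^ (n - (j + m))
        = (n.choose j : ℝ) * a ^ j * ((((n - j).choose m : ℝ)) * a ^ m * b ^ (n - j - m)) := by
    intro m hm
    simp only [mem_range] at hm
    have hc : n.choose (j + m) * (j + m).choose j = n.choose j * (n - j).choose m := by
      have := Nat.choose_mul (n := n) (k := j + m) (s := j) (by omega)
      simpa using this
    have hc' : (n.choose (j + m) : ℝ) * ((j + m).choose j : ℝ)
        = (n.choose j : ℝ) * ((n - j).choose m : ℝ) := by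
      exact_mod_cast congrArg (Nat.cast : ℕ → ℝ) hc
    have hnn : n - (j + m) = n - j - m := by omega
    rw [hnn, hc', pow_add]
    ring
  rw [Finset.sum_congr rfl h3, ← Finset.mul_sum]
  congr 1
  rw [add_pow]
  apply Finset.sum_congr rfl
  intro m _
  ring

lemma qEuler_eq (q : ℝ) (m : ℕ) :
    qEuler q m 0 0 = (1 + q) * ((1 - q) ^ m)⁻¹ *
      ∑ j ∈ range (m + 1), (m.choose j : ℝ) * (-1) ^ j / (1 + q ^ j) := by
  unfold qEuler
  congr 1
  apply Finset.sum_congr rfl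
  intro j _
  rw [mul_zero, Real.rpow_zero, add_zero, mul_one]

lemma geom_part (q : ℝ) (hq0 : 0 < q) (k j : ℕ) (hko : Odd k) :
    ∑ l ∈ range k, (-1 : ℝ) ^ l * (q ^ j) ^ l = (q ^ (j * k) + 1) / (q ^ j + 1) := by
  have h1 : ∀ l, (-1 : ℝ) ^ l * (q ^ j) ^ l = (-(q ^ j)) ^ l := by
    intro l; rw [neg_pow]; ring
  simp only [h1]
  have hne : (-(q ^ j) : ℝ) ≠ 1 := by nlinarith [pow_pos hq0 j]
  rw [geom_sum_eq hne, hko.neg_pow, ← pow_mul]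
  have e1 : (-(q ^ (j * k)) - 1) = -(q ^ (j * k) + 1) := by ring
  rw [e1]
  have e2 : (-(q ^ j) - 1) = -(q ^ j + 1) := by ring
  rw [e2, neg_div_neg_eq]

lemma lemB (q : ℝ) (hq1 : q < 1) (n k : ℕ) :
    ∑ l ∈ range (n + 1), (n.choose l : ℝ) * q ^ (k * l) * qEuler q l 0 0
        * ((1 - q ^ k) / (1 - q)) ^ (n - l)
      = (1 + q) * ((1 - q) ^ n)⁻¹ *
        ∑ j ∈ range (n + 1), (n.choose j : ℝ) * (-1) ^ j * q ^ (k * j) / (1 + q ^ j) := by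
  have step : ∀ l ∈ range (n + 1),
      (n.choose l : ℝ) * q ^ (k * l) * qEuler q l 0 0 * ((1 - q ^ k) / (1 - q)) ^ (n - l)
      = (1 + q) * ((1 - q) ^ n)⁻¹ * ∑ j ∈ range (n + 1),
          (n.choose l : ℝ) * (l.choose j : ℝ) * (q ^ k) ^ l * (1 - q ^ k) ^ (n - l)
            * ((-1) ^ j / (1 + q ^ j)) := by
    intro l hl
    simp only [mem_range] at hl
    rw [qEuler_eq q l, div_pow]
    have hpow : ((1 - q) ^ l)⁻¹ * ((1 - q) ^ (n - l))⁻¹ = ((1 - q) ^ n)⁻¹ := by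
      rw [← mul_inv, ← pow_add]
      congr 2
      omega
    have hext : ∑ j ∈ range (l + 1), (l.choose j : ℝ) * (-1) ^ j / (1 + q ^ j)
        = ∑ j ∈ range (n + 1), (l.choose j : ℝ) * (-1) ^ j / (1 + q ^ j) := by
      apply Finset.sum_subset
      · intro x hx; simp only [mem_range] at *; omega
      · intro x _ hx
        simp only [mem_range] at hx
        rw [Nat.choose_eq_zero_of_lt (by omega)]
        simp
    have hpull : ∑ j ∈ range (n + 1),
        (n.choose l : ℝ) * (l.choose j : ℝ) * (q ^ k) ^ l * (1 - q ^ k) ^ (n - l)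
          * ((-1) ^ j / (1 + q ^ j))
        = ((n.choose l : ℝ) * (q ^ k) ^ l * (1 - q ^ k) ^ (n - l)) *
            ∑ j ∈ range (n + 1), (l.choose j : ℝ) * (-1) ^ j / (1 + q ^ j) := by
      rw [Finset.mul_sum]
      apply Finset.sum_congr rfl
      intro j _
      ring
    rw [hext, hpull, ← hpow, pow_mul]
    ring
  rw [Finset.sum_congr rfl step, ← Finset.mul_sum, Finset.sum_comm]
  congr 1
  apply Finset.sum_congr rfl
  intro j hj
  simp only [mem_range] at hj
  have hs : ∑ l ∈ range (n + 1),
      (n.choose l : ℝ) * (l.choose j : ℝ) * (q ^ k) ^ l * (1 - q ^ k) ^ (n - l)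
        * ((-1) ^ j / (1 + q ^ j))
      = (∑ l ∈ range (n + 1),
          (n.choose l : ℝ) * (l.choose j : ℝ) * (q ^ k) ^ l * (1 - q ^ k) ^ (n - l))
        * ((-1) ^ j / (1 + q ^ j)) := by
    rw [Finset.sum_mul]
  rw [hs, sum_choose_mul n j (by omega) (q ^ k) (1 - q ^ k)]
  have : q ^ k + (1 - q ^ k) = 1 := by ring
  rw [this, one_pow, ← pow_mul, mul_one]
  ring

lemma lemA (q : ℝ) (hq0 : 0 < q) (n k : ℕ) (hko : Odd k) :
    (1 + q) * ∑ l ∈ range k, (-1 : ℝ) ^ l * ((1 - q ^ l) / (1 - q)) ^ n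
      = (1 + q) * ((1 - q) ^ n)⁻¹ *
        ∑ j ∈ range (n + 1), (n.choose j : ℝ) * (-1) ^ j * (q ^ (k * j) + 1) / (1 + q ^ j) := by
  have step : ∀ l ∈ range k, (-1 : ℝ) ^ l * ((1 - q ^ l) / (1 - q)) ^ n
      = ((1 - q) ^ n)⁻¹ * ∑ j ∈ range (n + 1),
          (n.choose j : ℝ) * (-1) ^ j * ((-1) ^ l * (q ^ j) ^ l) := by
    intro l _
    rw [div_pow, div_eq_mul_inv]
    have hexp : (1 - q ^ l) ^ n = ∑ j ∈ range (n + 1),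
        (n.choose j : ℝ) * (-1) ^ j * (q ^ j) ^ l := by
      have h := add_pow (-(q ^ l)) 1 n
      have e : -(q ^ l) + 1 = 1 - q ^ l := by ring
      rw [e] at h
      rw [h]
      apply Finset.sum_congr rfl
      intro j _
      rw [neg_pow, ← pow_mul, mul_comm l j, pow_mul]
      ring
    rw [hexp, Finset.sum_mul, Finset.mul_sum, Finset.mul_sum]
    apply Finset.sum_congr rfl
    intro j _
    ring
  rw [Finset.sum_congr rfl step, ← Finset.mul_sum, Finset.sum_comm, ← mul_assoc]
  congr 1
  apply Finset.sum_congr rfl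
  intro j _
  have hp : ∑ l ∈ range k, (n.choose j : ℝ) * (-1) ^ j * ((-1) ^ l * (q ^ j) ^ l)
      = (n.choose j : ℝ) * (-1) ^ j * ∑ l ∈ range k, (-1 : ℝ) ^ l * (q ^ j) ^ l := by
    rw [Finset.mul_sum]
  rw [hp, geom_part q hq0 k j hko, mul_comm j k, add_comm (q ^ j) 1]
  ring

/-- for odd `k ≥ 1`,
`[2]_q Σ_{l=0}^{k-1} (-1)^l [l]_qⁿ = (q^{kn} + 1) E_{n,q} + Σ_{l=0}^{n-1} C(n,l) q^{kl} E_{l,q} [k]_q^{n-l}`. -/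
theorem qEuler_odd_identity (q : ℝ) (hq0 : 0 < q) (hq1 : q < 1)
    (n k : ℕ) (hk : 1 ≤ k) (hko : Odd k) :
    (1 + q) * ∑ l ∈ range k, (-1 : ℝ) ^ l * (qNum q (l : ℝ)) ^ n
      = (q ^ (k * n) + 1) * qEuler q n 0 0
        + ∑ l ∈ range n, (n.choose l : ℝ) * q ^ (k * l) * qEuler q l 0 0
            * (qNum q (k : ℝ)) ^ (n - l) := by
  have hqnum : ∀ m : ℕ, qNum q (m : ℝ) = (1 - q ^ m) / (1 - q) := by
    intro m
    unfold qNum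
    rw [Real.rpow_natCast]
  simp only [hqnum]
  -- rewrite RHS using the full sum over range (n+1)
  have hfull := lemB q hq1 n k
  rw [Finset.sum_range_succ] at hfull
  have hlast : (n.choose n : ℝ) * q ^ (k * n) * qEuler q n 0 0
      * ((1 - q ^ k) / (1 - q)) ^ (n - n) = q ^ (k * n) * qEuler q n 0 0 := by
    rw [Nat.choose_self, Nat.sub_self, pow_zero]
    push_cast
    ring
  rw [hlast] at hfull
  have hrhs : ∑ l ∈ range n, (n.choose l : ℝ) * q ^ (k * l) * qEuler q l 0 0
      * ((1 - q ^ k) / (1 - q)) ^ (n - l)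
      = (1 + q) * ((1 - q) ^ n)⁻¹ *
          (∑ j ∈ range (n + 1), (n.choose j : ℝ) * (-1) ^ j * q ^ (k * j) / (1 + q ^ j))
        - q ^ (k * n) * qEuler q n 0 0 := by
    linarith [hfull]
  have hSA : (∑ j ∈ range (n + 1), (n.choose j : ℝ) * (-1) ^ j * (q ^ (k * j) + 1) / (1 + q ^ j))
      = (∑ j ∈ range (n + 1), (n.choose j : ℝ) * (-1) ^ j / (1 + q ^ j))
        + (∑ j ∈ range (n + 1), (n.choose j : ℝ) * (-1) ^ j * q ^ (k * j) / (1 + q ^ j)) := by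
    rw [← Finset.sum_add_distrib]
    apply Finset.sum_congr rfl
    intro j _
    rw [← add_div]
    congr 1
    ring
  rw [hrhs, lemA q hq0 n k hko, qEuler_eq q n, hSA]
  ring
end

section
/- Let q be a real number with 0 < q < 1, let h ≥ 1 be an integer and let n ≥ 1 be an integer. Then the series [2]_q Σ_{m=1}^∞ (−1)^m q^{mh} [m]_q^n converges absolutely, and its sum equals E_n(h | q); that is, the q-Euler zeta function ζ_{E,q}(s | h) = [2]_q Σ_{m=1}^∞ (−1)^m q^{mh} / [m]_q^s, evaluated at s = −n, interpolates the q-Euler numbers: ζ_{E,q}(−n | h) = E_n(h | q). -/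
open Finset

/-- the series `[2]_q Σ_{m=1}^∞ (-1)^m q^{mh} [m]_qⁿ` converges absolutely and
equals `E_n(h|q)`, i.e. `ζ_{E,q}(-n | h) = E_n(h|q)`. -/
theorem qEuler_zeta_at_neg_int (q : ℝ) (hq0 : 0 < q) (hq1 : q < 1)
    (h : ℕ) (hh : 1 ≤ h) (n : ℕ) (hn : 1 ≤ n) :
    Summable (fun m : ℕ => |(-1 : ℝ) ^ (m + 1) * q ^ ((m + 1) * h) * (qNum q ((m : ℝ) + 1)) ^ n|) ∧
    (1 + q) * ∑' m : ℕ, (-1 : ℝ) ^ (m + 1) * q ^ ((m + 1) * h) * (qNum q ((m : ℝ) + 1)) ^ n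
      = qEuler q n h 0 := by
  have h1q : (0:ℝ) < 1 - q := by linarith
  -- abbreviations
  set g : ℕ → ℕ → ℝ := fun l m =>
    ((1 - q) ^ n)⁻¹ * (n.choose l : ℝ) * (-1) ^ l * (-(q ^ (h + l))) ^ (m + 1) with hg
  set f : ℕ → ℝ := fun m =>
    (-1 : ℝ) ^ (m + 1) * q ^ ((m + 1) * h) * (qNum q ((m : ℝ) + 1)) ^ n with hf
  have hnum : ∀ m : ℕ, qNum q ((m : ℝ) + 1) = (1 - q ^ (m + 1)) / (1 - q) := by
    intro m
    have hc : ((m : ℝ) + 1) = ((m + 1 : ℕ) : ℝ) := by push_cast; ring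
    rw [qNum, hc, Real.rpow_natCast]
  -- key pointwise identity
  have key : ∀ m : ℕ, f m = ∑ l ∈ range (n + 1), g l m := by
    intro m
    have hbin : (1 - q ^ (m + 1)) ^ n
        = ∑ l ∈ range (n + 1), (-(q ^ (m + 1))) ^ l * 1 ^ (n - l) * (n.choose l : ℝ) := by
      rw [← add_pow]; ring_nf
    simp only [hf, hnum, div_pow, hbin, Finset.sum_div, Finset.mul_sum, hg]
    refine Finset.sum_congr rfl fun l _ => ?_
    have hpow : (-(q ^ (h + l))) ^ (m + 1)
        = (-1 : ℝ) ^ (m + 1) * q ^ ((m + 1) * h) * (q ^ (m + 1)) ^ l := by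
      rw [neg_pow, ← pow_mul, ← pow_mul]
      ring_nf
    rw [hpow]
    have hne : (1 - q) ^ n ≠ 0 := pow_ne_zero _ (by linarith)
    field_simp
    ring
  -- summability of each g l
  have hxl : ∀ l : ℕ, ‖-(q ^ (h + l))‖ < 1 := by
    intro l
    rw [norm_neg, Real.norm_eq_abs, abs_of_pos (pow_pos hq0 _)]
    exact pow_lt_one₀ hq0.le hq1 (by omega)
  have hsumg : ∀ l ∈ range (n + 1), Summable (g l) := by
    intro l _
    have : Summable fun m : ℕ => (-(q ^ (h + l))) ^ (m + 1) := by
      have := summable_geometric_of_norm_lt_one (hxl l)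
      simpa [pow_succ'] using this.mul_left (-(q ^ (h + l)))
    exact this.mul_left _
  have hsumf : Summable f := (summable_sum hsumg).congr fun m => (key m).symm
  refine ⟨hsumf.abs, ?_⟩
  -- compute the tsum
  have htsum : ∑' m, f m = ∑ l ∈ range (n + 1), ∑' m, g l m := by
    rw [tsum_congr key, Summable.tsum_finsetSum hsumg]
  have hgeom : ∀ l : ℕ, ∑' m : ℕ, (-(q ^ (h + l))) ^ (m + 1)
      = -(q ^ (h + l)) * (1 + q ^ (h + l))⁻¹ := by
    intro l
    calc ∑' m : ℕ, (-(q ^ (h + l))) ^ (m + 1)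
        = ∑' m : ℕ, -(q ^ (h + l)) * (-(q ^ (h + l))) ^ m := by
          refine tsum_congr fun m => ?_; rw [pow_succ']
      _ = -(q ^ (h + l)) * (1 - -(q ^ (h + l)))⁻¹ := by
          rw [tsum_mul_left, tsum_geometric_of_norm_lt_one (hxl l)]
      _ = -(q ^ (h + l)) * (1 + q ^ (h + l))⁻¹ := by ring_nf
  have htsumgl : ∀ l : ℕ, ∑' m, g l m
      = ((1 - q) ^ n)⁻¹ * (n.choose l : ℝ) * (-1) ^ l *
          ((1 + q ^ (h + l))⁻¹ - 1) := by
    intro l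
    have hpos : (0:ℝ) < 1 + q ^ (h + l) := by positivity
    rw [hg]
    simp only []
    rw [tsum_mul_left, hgeom l]
    have : -(q ^ (h + l)) * (1 + q ^ (h + l))⁻¹ = (1 + q ^ (h + l))⁻¹ - 1 := by
      field_simp
      ring
    rw [this]
  -- the alternating sum of binomial coefficients is zero
  have halt : ∑ l ∈ range (n + 1), (n.choose l : ℝ) * (-1) ^ l = 0 := by
    have h0 := add_pow (-1 : ℝ) 1 n
    simp only [neg_add_cancel, one_pow, mul_one] at h0
    rw [zero_pow (by omega : n ≠ 0)] at h0
    rw [show (∑ l ∈ range (n + 1), (n.choose l : ℝ) * (-1) ^ l)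
        = ∑ l ∈ range (n + 1), (-1 : ℝ) ^ l * (n.choose l : ℝ) from
      Finset.sum_congr rfl fun l _ => mul_comm _ _, ← h0]
  -- finish
  have expand : ∀ l : ℕ,
      ((1 - q) ^ n)⁻¹ * (n.choose l : ℝ) * (-1) ^ l * ((1 + q ^ (h + l))⁻¹ - 1)
        = ((1 - q) ^ n)⁻¹ * ((n.choose l : ℝ) * (-1) ^ l * 1 / (1 + q ^ (l + h)))
          - ((1 - q) ^ n)⁻¹ * ((n.choose l : ℝ) * (-1) ^ l) := by
    intro l
    have hpos : (0:ℝ) < 1 + q ^ (l + h) := by positivity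
    rw [add_comm h l]
    field_simp
  rw [htsum, qEuler]
  simp only [htsumgl, expand, Finset.sum_sub_distrib, ← Finset.mul_sum, halt, mul_zero,
    sub_zero, Real.rpow_zero]
  ring
end
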